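/- Let t ∈ [0,1) and N ∈ (1/2)ℤ. There exists a constant C ≥ 0 such that |α_N(l)·((1+q²)(1−t))^{−1/2} − 1| ≤ C·q^{2l} for all real l ≥ max(|N|, 1). In particular, α_N(l) → ((1+q²)(1−t))^{1/2} as l → ∞. -/

import Mathlib

noncomputable section

open scoped BigOperators


lemma abs_sqrt_sub_one_le {x : ℝ} (hx : 0 ≤ x) : |Real.sqrt x - 1| ≤ |x - 1| := by
  set s := Real.sqrt x with hs
  have hs0 : 0 ≤ s := Real.sqrt_nonneg x
  have hsq : s ^ 2 = x := Real.sq_sqrt hx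
  have h1 : |s - 1| ≤ |s - 1| * (s + 1) := le_mul_of_one_le_right (abs_nonneg _) (by linarith)
  have h2 : |s - 1| * (s + 1) = |x - 1| := by
    rw [← abs_of_nonneg (show (0:ℝ) ≤ s + 1 by linarith), ← abs_mul]
    congr 1; nlinarith
  linarith [h1, h2.le, h2.ge]

lemma sqrt_combine (A B C D E : ℝ) (hA : 0 ≤ A) (hB : 0 < B) (hC : 0 < C) (hD : 0 ≤ D)
    (hE : 0 < E) :
    Real.sqrt A / (Real.sqrt B * C) * Real.sqrt D * (Real.sqrt E)⁻¹ =
      Real.sqrt (A * D / (B * C ^ 2 * E)) := by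
  rw [div_eq_mul_inv (A * D), Real.sqrt_mul (by positivity), Real.sqrt_inv,
    Real.sqrt_mul hA, Real.sqrt_mul (by positivity : (0:ℝ) ≤ B * C ^ 2),
    Real.sqrt_mul hB.le, Real.sqrt_sq hC.le]
  have h1 : Real.sqrt B ≠ 0 := by positivity
  have h2 : Real.sqrt E ≠ 0 := by positivity
  field_simp

lemma prod3_bound {u v w : ℝ} (hu0 : 0 ≤ u) (hu1 : u ≤ 1) (hv0 : 0 ≤ v) (hv1 : v ≤ 1)
    (hw0 : 0 ≤ w) (_hw1 : w ≤ 1) : |(1 - u) * (1 - v) * (1 - w) - 1| ≤ u + v + w := by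
  have huv : (1 - u) * (1 - v) ≤ 1 := by nlinarith
  have huv0 : 0 ≤ (1 - u) * (1 - v) := by nlinarith
  rw [abs_le]
  constructor
  · nlinarith [mul_nonneg hu0 hv0, mul_nonneg (mul_nonneg hu0 hv0) hw0, mul_nonneg hu0 hw0,
      mul_nonneg hv0 hw0]
  · nlinarith

set_option maxHeartbeats 1000000 in
lemma algX (r s q : ℝ) (hq : q ≠ 0) (hr : r ≠ 0) (hs : s ≠ 0)
    (h1 : (1:ℝ) - r^2 ≠ 0) (h3 : (1:ℝ) - (r^2)^2*q^2 ≠ 0) (_h9 : (1:ℝ) + q^2 ≠ 0)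
    (h10 : (1:ℝ) - (r^2*q)^2 ≠ 0) (h11 : (1:ℝ) - q^2 ≠ 0) :
    (q * (1-q^2)⁻¹ * ((q^(2:ℕ)))⁻¹ * (1 - (q^(2:ℕ))^2)) * (q * (1-q^2)⁻¹ * (r*s)⁻¹ * (1 - (r*s)^2)) *
      (q * (1-q^2)⁻¹ * (r*s⁻¹)⁻¹ * (1 - (r*s⁻¹)^2)) * (q * (1-q^2)⁻¹ * (r^2)⁻¹ * (1 - (r^2)^2)) /
      ((q * (1-q^2)⁻¹ * (r^2*q)⁻¹ * (1 - (r^2*q)^2)) * (q * (1-q^2)⁻¹ * r⁻¹ * (1 - r^2))^2 * (1 + q^2)) =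
    ((1 - r^2 * s^2) * (1 - r^2 * (s^2)⁻¹) * (1 - (r^2)^2)) /
      ((1 - (r^2)^2 * q^2) * (1 - r^2)^2) := by
  field_simp
  ring

set_option maxHeartbeats 1000000 in
lemma algY (r s q t : ℝ) (hq : q ≠ 0) (hr : r ≠ 0) (hs : s ≠ 0)
    (_h1 : (1:ℝ) - r^2 ≠ 0) (_h6 : (1:ℝ) + r^2 ≠ 0) (h7 : (1:ℝ) - t ≠ 0)
    (h11 : (1:ℝ) - q^2 ≠ 0) (h12 : (1:ℝ) - (r^2)^2 ≠ 0) :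
    (1 - t + (s^2)⁻¹ * ((q * (1-q^2)⁻¹ * (r^2)⁻¹ * (1 - (r^2)^2))⁻¹) ^ 2 *
        (q * (1-q^2)⁻¹ * r⁻¹ * (1 - r^2)) ^ 2 * (t - 1 + s^2) ^ 2) / (1 - t) =
    1 + r^2 * (t - 1 + s^2)^2 / ((1 - t) * s^2 * (1 + r^2)^2) := by
  have e : (1:ℝ) - (r^2)^2 = (1 - r^2) * (1 + r^2) := by ring
  rw [e]
  field_simp

namespace Podles

/-- The `q`-number `[x] = (q^x - q^(-x))/(q - q⁻¹)`. -/
def qn (q x : ℝ) : ℝ := (q ^ x - q ^ (-x)) / (q - q⁻¹)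

def alphaN (q t N l : ℝ) : ℝ :=
  Real.sqrt (qn q 2 * qn q (l + N) * qn q (l - N) * qn q (2 * l)) /
      (Real.sqrt (qn q (2 * l + 1)) * qn q l) *
    Real.sqrt (1 - t + q ^ (-(2 * N)) * ((qn q (2 * l))⁻¹) ^ 2 * qn q l ^ 2 *
      (t - 1 + q ^ (2 * N)) ^ 2)

def betaN (q t N l : ℝ) : ℝ :=
  (Real.sign N * qn q (2 * |N|) * (q⁻¹ + q - q ^ Real.sign N * t) +
      t * (q - q⁻¹) * (qn q |N| * qn q (|N| + 1) - qn q l * qn q (l + 1))) /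
    (q * qn q (2 * l + 2))

/-- The coefficients `α^ν_i(l, m; N)`, with the convention that they vanish
whenever `l + ν < |N|` or `|m + i| > l + ν`. -/
def coef (q t : ℝ) (i ν : ℤ) (N l m : ℝ) : ℝ :=
  if l + (ν : ℝ) < |N| ∨ l + (ν : ℝ) < |m + (i : ℝ)| then 0
  else if i = 1 ∧ ν = 1 then
    q ^ (-l + m) * Real.sqrt (qn q (l + m + 1)) * Real.sqrt (qn q (l + m + 2)) *
      (Real.sqrt (qn q (2 * l + 1)))⁻¹ * (Real.sqrt (qn q (2 * l + 2)))⁻¹ * alphaN q t N (l + 1)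
  else if i = 1 ∧ ν = 0 then
    -(q ^ (m + 2)) * Real.sqrt (qn q (l - m)) * Real.sqrt (qn q (l + m + 1)) *
      Real.sqrt (qn q 2) * (qn q (2 * l))⁻¹ * betaN q t N l
  else if i = 1 ∧ ν = -1 then
    -(q ^ (l + m + 1)) * Real.sqrt (qn q (l - m - 1)) * Real.sqrt (qn q (l - m)) *
      (Real.sqrt (qn q (2 * l - 1)))⁻¹ * (Real.sqrt (qn q (2 * l)))⁻¹ * alphaN q t N l
  else if i = 0 ∧ ν = 1 then
    q ^ m * Real.sqrt (qn q (l - m + 1)) * Real.sqrt (qn q (l + m + 1)) * Real.sqrt (qn q 2) *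
      (Real.sqrt (qn q (2 * l + 1)))⁻¹ * (Real.sqrt (qn q (2 * l + 2)))⁻¹ * alphaN q t N (l + 1)
  else if i = 0 ∧ ν = 0 then
    (qn q (2 * l))⁻¹ *
      (qn q (l - m + 1) * qn q (l + m) - q ^ (2 : ℝ) * qn q (l - m) * qn q (l + m + 1)) *
      betaN q t N l
  else if i = 0 ∧ ν = -1 then
    q ^ m * Real.sqrt (qn q (l - m)) * Real.sqrt (qn q (l + m)) * Real.sqrt (qn q 2) *
      (Real.sqrt (qn q (2 * l - 1)))⁻¹ * (Real.sqrt (qn q (2 * l)))⁻¹ * alphaN q t N l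
  else if i = -1 ∧ ν = 1 then
    q ^ (l + m) * Real.sqrt (qn q (l - m + 1)) * Real.sqrt (qn q (l - m + 2)) *
      (Real.sqrt (qn q (2 * l + 1)))⁻¹ * (Real.sqrt (qn q (2 * l + 2)))⁻¹ * alphaN q t N (l + 1)
  else if i = -1 ∧ ν = 0 then
    q ^ m * Real.sqrt (qn q (l - m + 1)) * Real.sqrt (qn q (l + m)) * Real.sqrt (qn q 2) *
      (qn q (2 * l))⁻¹ * betaN q t N l
  else if i = -1 ∧ ν = -1 then
    -(q ^ (-l + m - 1)) * Real.sqrt (qn q (l + m - 1)) * Real.sqrt (qn q (l + m)) *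
      (Real.sqrt (qn q (2 * l - 1)))⁻¹ * (Real.sqrt (qn q (2 * l)))⁻¹ * alphaN q t N l
  else 0



variable {q t N l : ℝ}

lemma qn_nonneg (hq0 : 0 < q) (hq1 : q < 1) {x : ℝ} (hx : 0 ≤ x) : 0 ≤ qn q x := by
  have h1 : q ^ x ≤ q ^ (-x) := Real.rpow_le_rpow_of_exponent_ge hq0 hq1.le (by linarith)
  have h2 : q - q⁻¹ < 0 := by
    have := mul_inv_cancel₀ (ne_of_gt hq0)
    nlinarith
  exact div_nonneg_of_nonpos (by linarith) h2.le

lemma qn_pos (hq0 : 0 < q) (hq1 : q < 1) {x : ℝ} (hx : 0 < x) : 0 < qn q x := by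
  have h1 : q ^ x < q ^ (-x) := Real.rpow_lt_rpow_of_exponent_gt hq0 hq1 (by linarith)
  have h2 : q - q⁻¹ < 0 := by
    have := mul_inv_cancel₀ (ne_of_gt hq0)
    nlinarith
  exact div_pos_of_neg_of_neg (by linarith) h2

lemma qn_eq (hq0 : 0 < q) (hq1 : q < 1) (x : ℝ) :
    qn q x = q * (1 - q ^ 2)⁻¹ * (q ^ x)⁻¹ * (1 - (q ^ x) ^ 2) := by
  have hx : q ^ x ≠ 0 := (Real.rpow_pos_of_pos hq0 x).ne'
  have hq0' : q ≠ 0 := ne_of_gt hq0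
  have h11 : (1:ℝ) - q ^ 2 ≠ 0 := by nlinarith
  have hqq' : q - q⁻¹ ≠ 0 := by
    have := mul_inv_cancel₀ hq0'
    intro h; nlinarith
  rw [qn, Real.rpow_neg hq0.le, div_eq_iff hqq']
  field_simp
  ring

set_option maxHeartbeats 1000000 in
lemma key_eq (q t N l : ℝ) (hq0 : 0 < q) (hq1 : q < 1) (ht0 : 0 ≤ t) (ht1 : t < 1)
    (hl : max |N| 1 ≤ l) :
    alphaN q t N l * (Real.sqrt ((1 + q ^ 2) * (1 - t)))⁻¹ =
      Real.sqrt
        ((((1 - (q^l)^2 * (q^N)^2) * (1 - (q^l)^2 * ((q^N)^2)⁻¹) * (1 - ((q^l)^2)^2)) /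
            ((1 - ((q^l)^2)^2 * q^2) * (1 - (q^l)^2)^2)) *
          (1 + (q^l)^2 * (t - 1 + (q^N)^2)^2 / ((1 - t) * (q^N)^2 * (1 + (q^l)^2)^2))) := by
  have hq0' : q ≠ 0 := ne_of_gt hq0
  have hlN : |N| ≤ l := le_trans (le_max_left _ _) hl
  have hl1 : 1 ≤ l := le_trans (le_max_right _ _) hl
  obtain ⟨hN1, hN2⟩ := abs_le.mp hlN
  have hr : 0 < q ^ l := Real.rpow_pos_of_pos hq0 _
  have hs : 0 < q ^ N := Real.rpow_pos_of_pos hq0 _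
  have hA : 0 ≤ qn q 2 * qn q (l + N) * qn q (l - N) * qn q (2 * l) := by
    have := qn_pos hq0 hq1 (show (0:ℝ) < 2 by norm_num)
    have := qn_nonneg hq0 hq1 (show (0:ℝ) ≤ l + N by linarith)
    have := qn_nonneg hq0 hq1 (show (0:ℝ) ≤ l - N by linarith)
    have := qn_pos hq0 hq1 (show (0:ℝ) < 2 * l by linarith)
    positivity
  have hB : 0 < qn q (2 * l + 1) := qn_pos hq0 hq1 (by linarith)
  have hC : 0 < qn q l := qn_pos hq0 hq1 (by linarith)
  have hD : 0 ≤ 1 - t + q ^ (-(2 * N)) * ((qn q (2 * l))⁻¹) ^ 2 * qn q l ^ 2 *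
      (t - 1 + q ^ (2 * N)) ^ 2 := by
    have h1 : (0:ℝ) < q ^ (-(2 * N)) := Real.rpow_pos_of_pos hq0 _
    have h2 : (0:ℝ) ≤ ((qn q (2 * l))⁻¹) ^ 2 := sq_nonneg _
    nlinarith [mul_nonneg (mul_nonneg (mul_nonneg h1.le h2) (sq_nonneg (qn q l)))
      (sq_nonneg (t - 1 + q ^ (2 * N)))]
  have hE : (0:ℝ) < (1 + q ^ 2) * (1 - t) := by nlinarith [sq_nonneg q]
  rw [alphaN, sqrt_combine _ _ _ _ _ hA hB hC hD hE]
  congr 1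
  -- rpow facts
  have elN : q ^ (l + N) = q ^ l * q ^ N := Real.rpow_add hq0 _ _
  have elN' : q ^ (l - N) = q ^ l * (q ^ N)⁻¹ := by
    rw [Real.rpow_sub hq0, div_eq_mul_inv]
  have e2l : q ^ (2 * l) = (q ^ l) ^ 2 := by rw [two_mul, Real.rpow_add hq0, sq]
  have e2l1 : q ^ (2 * l + 1) = (q ^ l) ^ 2 * q := by
    rw [Real.rpow_add hq0, e2l, Real.rpow_one]
  have e2N : q ^ (2 * N) = (q ^ N) ^ 2 := by rw [two_mul, Real.rpow_add hq0, sq]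
  have em2N : q ^ (-(2 * N)) = ((q ^ N) ^ 2)⁻¹ := by rw [Real.rpow_neg hq0.le, e2N]
  have h2 : q ^ (2:ℝ) = q ^ (2:ℕ) := by rw [← Real.rpow_natCast q 2]; norm_num
  -- nonvanishing facts
  have hrl1 : q ^ l < 1 := Real.rpow_lt_one hq0.le hq1 (by linarith)
  have hrlq : (q ^ l) ^ 2 * q < 1 := by
    rw [← e2l1]; exact Real.rpow_lt_one hq0.le hq1 (by linarith)
  have hrl2 : (q ^ l) ^ 2 < 1 := by
    rw [← e2l]; exact Real.rpow_lt_one hq0.le hq1 (by linarith)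
  have hne4 : (1:ℝ) - (q ^ l) ^ 2 ≠ 0 := by nlinarith
  have hne5 : (1:ℝ) - ((q ^ l) ^ 2) ^ 2 * q ^ 2 ≠ 0 := by
    nlinarith [sq_nonneg ((q^l)^2), sq_nonneg q, mul_pos (mul_pos hr hr) hq0]
  have hne6 : (1:ℝ) + (q ^ l) ^ 2 ≠ 0 := by positivity
  have hne7 : (1:ℝ) - t ≠ 0 := by intro h; linarith
  have hne9 : (1:ℝ) + q ^ 2 ≠ 0 := by positivity
  have hne10 : (1:ℝ) - ((q ^ l) ^ 2 * q) ^ 2 ≠ 0 := by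
    nlinarith [mul_pos (mul_pos hr hr) hq0]
  have hne11 : (1:ℝ) - q ^ 2 ≠ 0 := by nlinarith
  have hne12 : (1:ℝ) - ((q ^ l) ^ 2) ^ 2 ≠ 0 := by nlinarith [mul_pos hr hr]
  have hX : qn q 2 * qn q (l + N) * qn q (l - N) * qn q (2 * l) /
      (qn q (2 * l + 1) * qn q l ^ 2 * (1 + q ^ 2)) =
      ((1 - (q^l)^2 * (q^N)^2) * (1 - (q^l)^2 * ((q^N)^2)⁻¹) * (1 - ((q^l)^2)^2)) /
        ((1 - ((q^l)^2)^2 * q^2) * (1 - (q^l)^2)^2) := by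
    simp only [qn_eq hq0 hq1, elN, elN', e2l, e2l1, h2]
    exact algX (q ^ l) (q ^ N) q hq0' hr.ne' hs.ne' hne4 hne5 hne9 hne10 hne11
  have hY : (1 - t + q ^ (-(2 * N)) * ((qn q (2 * l))⁻¹) ^ 2 * qn q l ^ 2 *
      (t - 1 + q ^ (2 * N)) ^ 2) / (1 - t) =
      1 + (q^l)^2 * (t - 1 + (q^N)^2)^2 / ((1 - t) * (q^N)^2 * (1 + (q^l)^2)^2) := by
    simp only [qn_eq hq0 hq1, e2l, e2N, em2N]
    exact algY (q ^ l) (q ^ N) q t hq0' hr.ne' hs.ne' hne4 hne6 hne7 hne11 hne12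
  calc qn q 2 * qn q (l + N) * qn q (l - N) * qn q (2 * l) *
        (1 - t + q ^ (-(2 * N)) * ((qn q (2 * l))⁻¹) ^ 2 * qn q l ^ 2 *
          (t - 1 + q ^ (2 * N)) ^ 2) /
        (qn q (2 * l + 1) * qn q l ^ 2 * ((1 + q ^ 2) * (1 - t))) =
      (qn q 2 * qn q (l + N) * qn q (l - N) * qn q (2 * l) /
        (qn q (2 * l + 1) * qn q l ^ 2 * (1 + q ^ 2))) *
      ((1 - t + q ^ (-(2 * N)) * ((qn q (2 * l))⁻¹) ^ 2 * qn q l ^ 2 *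
          (t - 1 + q ^ (2 * N)) ^ 2) / (1 - t)) := by
        rw [div_mul_div_comm]; congr 1; ring
    _ = _ := by rw [hX, hY]

set_option maxHeartbeats 2000000 in
lemma key_bound (q t N l : ℝ) (hq0 : 0 < q) (hq1 : q < 1) (ht0 : 0 ≤ t) (ht1 : t < 1)
    (hl : max |N| 1 ≤ l) :
    |alphaN q t N l * (Real.sqrt ((1 + q ^ 2) * (1 - t)))⁻¹ - 1| ≤
      (((q ^ (2*N) + (q ^ (2*N))⁻¹ + 4) / (1 - q^2)^3) *
          (1 + (t - 1 + q ^ (2*N))^2 / ((1-t) * q ^ (2*N))) +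
        (t - 1 + q ^ (2*N))^2 / ((1-t) * q ^ (2*N))) * q ^ (2*l) := by
  have hq0' : q ≠ 0 := ne_of_gt hq0
  have hlN : |N| ≤ l := le_trans (le_max_left _ _) hl
  have hl1 : 1 ≤ l := le_trans (le_max_right _ _) hl
  obtain ⟨hN1, hN2⟩ := abs_le.mp hlN
  have hr : 0 < q ^ l := Real.rpow_pos_of_pos hq0 _
  have hs : 0 < q ^ N := Real.rpow_pos_of_pos hq0 _
  have e2l : q ^ (2 * l) = (q ^ l) ^ 2 := by rw [two_mul, Real.rpow_add hq0, sq]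
  have e2N : q ^ (2 * N) = (q ^ N) ^ 2 := by rw [two_mul, Real.rpow_add hq0, sq]
  rw [key_eq q t N l hq0 hq1 ht0 ht1 hl, e2l, e2N]
  set a := (q ^ l) ^ 2 with ha_def
  set b := (q ^ N) ^ 2 with hb_def
  have ha0 : 0 < a := by positivity
  have hb0 : 0 < b := by positivity
  have hq2 : 0 < 1 - q ^ 2 := by nlinarith
  have hql : q ^ l ≤ q := by
    calc q ^ l ≤ q ^ (1:ℝ) := Real.rpow_le_rpow_of_exponent_ge hq0 hq1.le hl1
    _ = q := Real.rpow_one q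
  have haq : a ≤ q ^ 2 := by rw [ha_def]; exact pow_le_pow_left₀ hr.le hql 2
  have ha1 : a ≤ 1 := by nlinarith
  have hab : a * b ≤ 1 := by
    have h1 : q ^ (l + N) ≤ 1 := Real.rpow_le_one hq0.le hq1.le (by linarith)
    have h2 : q ^ (l + N) = q ^ l * q ^ N := Real.rpow_add hq0 _ _
    have h3 : a * b = (q ^ (l + N)) ^ 2 := by rw [h2]; ring
    rw [h3]
    nlinarith [Real.rpow_pos_of_pos hq0 (l + N)]
  have hab' : a * b⁻¹ ≤ 1 := by
    have h1 : q ^ (l - N) ≤ 1 := Real.rpow_le_one hq0.le hq1.le (by linarith)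
    have h2 : q ^ (l - N) = q ^ l / q ^ N := Real.rpow_sub hq0 _ _
    have h3 : a * b⁻¹ = (q ^ (l - N)) ^ 2 := by
      rw [h2, div_pow]; rw [ha_def, hb_def]; ring
    rw [h3]
    nlinarith [Real.rpow_pos_of_pos hq0 (l - N)]
  have habn : 0 ≤ a * b := by positivity
  have habn' : 0 ≤ a * b⁻¹ := by positivity
  have ha2 : a ^ 2 ≤ 1 := by nlinarith
  have ha2q : a ^ 2 * q ^ 2 ≤ 1 := by nlinarith
  set Num := (1 - a * b) * (1 - a * b⁻¹) * (1 - a ^ 2) with hNum_def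
  set Den := (1 - a ^ 2 * q ^ 2) * (1 - a) ^ 2 with hDen_def
  set K := (t - 1 + b) ^ 2 / ((1 - t) * b) with hK_def
  have hK0 : 0 ≤ K := by
    rw [hK_def]
    exact div_nonneg (sq_nonneg _) (mul_pos (by linarith : (0:ℝ) < 1 - t) hb0).le
  have hNum1 : |Num - 1| ≤ a * b + a * b⁻¹ + a ^ 2 :=
    prod3_bound habn hab habn' hab' (by positivity) ha2
  have hDen1 : |Den - 1| ≤ a ^ 2 * q ^ 2 + a + a := by
    have h := prod3_bound (u := a ^ 2 * q ^ 2) (v := a) (w := a) (by positivity) ha2q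
      ha0.le ha1 ha0.le ha1
    have he : (1 - a ^ 2 * q ^ 2) * (1 - a) * (1 - a) = Den := by rw [hDen_def]; ring
    rwa [he] at h
  have hND : |Num - Den| ≤ a * (b + b⁻¹ + 4) := by
    have h1 : |Num - Den| ≤ |Num - 1| + |Den - 1| := by
      calc |Num - Den| = |(Num - 1) + (1 - Den)| := by ring_nf
      _ ≤ |Num - 1| + |1 - Den| := abs_add_le _ _
      _ = |Num - 1| + |Den - 1| := by rw [abs_sub_comm 1 Den]
    have h2 : a ^ 2 ≤ a := by nlinarith
    have h3 : a ^ 2 * q ^ 2 ≤ a := by nlinarith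
    calc |Num - Den| ≤ (a * b + a * b⁻¹ + a ^ 2) + (a ^ 2 * q ^ 2 + a + a) := by linarith
    _ ≤ a * (b + b⁻¹ + 4) := by nlinarith
  have hDenlb : (1 - q ^ 2) ^ 3 ≤ Den := by
    have h1 : 1 - q ^ 2 ≤ 1 - a ^ 2 * q ^ 2 := by nlinarith
    have h2 : (1 - q ^ 2) ^ 2 ≤ (1 - a) ^ 2 := by nlinarith
    calc (1 - q ^ 2) ^ 3 = (1 - q ^ 2) * (1 - q ^ 2) ^ 2 := by ring
    _ ≤ (1 - a ^ 2 * q ^ 2) * (1 - a) ^ 2 := by nlinarith [sq_nonneg (1 - q ^ 2)]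
    _ = Den := rfl
  have hDen0 : 0 < Den := lt_of_lt_of_le (by positivity) hDenlb
  have hF1 : |Num / Den - 1| ≤ a * (b + b⁻¹ + 4) / (1 - q ^ 2) ^ 3 := by
    have h1 : Num / Den - 1 = (Num - Den) / Den := by field_simp
    rw [h1, abs_div, abs_of_pos hDen0]
    exact div_le_div₀ (by positivity) hND (pow_pos hq2 3) hDenlb
  set F2 := 1 + a * (t - 1 + b) ^ 2 / ((1 - t) * b * (1 + a) ^ 2) with hF2_def
  have hF2a : 1 ≤ F2 := by
    rw [hF2_def]
    have : 0 ≤ a * (t - 1 + b) ^ 2 / ((1 - t) * b * (1 + a) ^ 2) :=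
      div_nonneg (by positivity) (mul_nonneg (mul_nonneg (by linarith) hb0.le) (sq_nonneg _))
    linarith
  have hF2b : F2 - 1 ≤ a * K := by
    have hX0 : 0 < (1 - t) * b := mul_pos (by linarith) hb0
    have h1 : (1 - t) * b ≤ (1 - t) * b * (1 + a) ^ 2 := by
      nlinarith [mul_nonneg hX0.le (by positivity : (0:ℝ) ≤ 2 * a + a ^ 2)]
    have h2 : a * (t - 1 + b) ^ 2 / ((1 - t) * b * (1 + a) ^ 2) ≤
        a * (t - 1 + b) ^ 2 / ((1 - t) * b) :=
      div_le_div_of_nonneg_left (by positivity) hX0 h1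
    calc F2 - 1 = a * (t - 1 + b) ^ 2 / ((1 - t) * b * (1 + a) ^ 2) := by
          rw [hF2_def]; ring
    _ ≤ a * (t - 1 + b) ^ 2 / ((1 - t) * b) := h2
    _ = a * K := by rw [hK_def, mul_div_assoc]
  have hF2c : F2 ≤ 1 + K := by
    have h5 : a * K ≤ K := by nlinarith
    linarith
  have hf0 : 0 ≤ Num / Den * F2 := by
    have hN0 : 0 ≤ Num := by
      rw [hNum_def]
      have := mul_nonneg (mul_nonneg (by linarith : (0:ℝ) ≤ 1 - a * b)
        (by linarith : (0:ℝ) ≤ 1 - a * b⁻¹)) (by linarith : (0:ℝ) ≤ 1 - a ^ 2)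
      linarith
    positivity
  have hsqrt := abs_sqrt_sub_one_le hf0
  have hfin : |Num / Den * F2 - 1| ≤
      ((b + b⁻¹ + 4) / (1 - q ^ 2) ^ 3 * (1 + K) + K) * a := by
    have h1 : Num / Den * F2 - 1 = (Num / Den - 1) * F2 + (F2 - 1) := by ring
    have h2 : |Num / Den * F2 - 1| ≤ |Num / Den - 1| * F2 + (F2 - 1) := by
      rw [h1]
      calc |(Num / Den - 1) * F2 + (F2 - 1)| ≤ |(Num / Den - 1) * F2| + |F2 - 1| := abs_add_le _ _
      _ = |Num / Den - 1| * F2 + (F2 - 1) := by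
          rw [abs_mul, abs_of_nonneg (by linarith : (0:ℝ) ≤ F2),
            abs_of_nonneg (by linarith : (0:ℝ) ≤ F2 - 1)]
    have h3 : |Num / Den - 1| * F2 ≤ a * (b + b⁻¹ + 4) / (1 - q ^ 2) ^ 3 * (1 + K) := by
      have hcn : 0 ≤ a * (b + b⁻¹ + 4) / (1 - q ^ 2) ^ 3 :=
        div_nonneg (by positivity) (pow_pos hq2 3).le
      have := mul_le_mul hF1 hF2c (by linarith) hcn
      linarith
    have h4 : F2 - 1 ≤ K * a := by
      have : a * K = K * a := mul_comm _ _
      linarith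
    calc |Num / Den * F2 - 1| ≤ |Num / Den - 1| * F2 + (F2 - 1) := h2
    _ ≤ a * (b + b⁻¹ + 4) / (1 - q ^ 2) ^ 3 * (1 + K) + K * a := add_le_add h3 h4
    _ = ((b + b⁻¹ + 4) / (1 - q ^ 2) ^ 3 * (1 + K) + K) * a := by ring
  calc |Real.sqrt (Num / Den * F2) - 1| ≤ |Num / Den * F2 - 1| := hsqrt
  _ ≤ ((b + b⁻¹ + 4) / (1 - q ^ 2) ^ 3 * (1 + K) + K) * a := hfin


/-- `|α_N(l) ((1+q²)(1−t))^{−1/2} − 1| ≤ C q^{2l}`, and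
`α_N(l) → ((1+q²)(1−t))^{1/2}` as `l → ∞`. -/
theorem statement6 (q t : ℝ) (hq0 : 0 < q) (hq1 : q < 1) (ht0 : 0 ≤ t) (ht1 : t < 1)
    (N : ℝ) (hN : ∃ n : ℤ, N = (n : ℝ) / 2) :
    (∃ C : ℝ, 0 ≤ C ∧ ∀ l : ℝ, max |N| 1 ≤ l →
        |alphaN q t N l * (Real.sqrt ((1 + q ^ 2) * (1 - t)))⁻¹ - 1| ≤ C * q ^ (2 * l)) ∧
    Filter.Tendsto (fun l : ℝ => alphaN q t N l) Filter.atTop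
      (nhds (Real.sqrt ((1 + q ^ 2) * (1 - t)))) := by
  have hb0 : (0:ℝ) < q ^ (2 * N) := Real.rpow_pos_of_pos hq0 _
  have hq2 : (0:ℝ) < 1 - q ^ 2 := by nlinarith
  have hK0 : 0 ≤ (t - 1 + q ^ (2 * N)) ^ 2 / ((1 - t) * q ^ (2 * N)) :=
    div_nonneg (sq_nonneg _) (mul_pos (by linarith) hb0).le
  have hM0 : 0 ≤ (q ^ (2 * N) + (q ^ (2 * N))⁻¹ + 4) / (1 - q ^ 2) ^ 3 :=
    div_nonneg (by positivity) (pow_pos hq2 3).le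
  have hC0 : 0 ≤ ((q ^ (2 * N) + (q ^ (2 * N))⁻¹ + 4) / (1 - q ^ 2) ^ 3) *
      (1 + (t - 1 + q ^ (2 * N)) ^ 2 / ((1 - t) * q ^ (2 * N))) +
      (t - 1 + q ^ (2 * N)) ^ 2 / ((1 - t) * q ^ (2 * N)) :=
    add_nonneg (mul_nonneg hM0 (by linarith)) hK0
  constructor
  · exact ⟨_, hC0, fun l hl => key_bound q t N l hq0 hq1 ht0 ht1 hl⟩
  · have hE : (0:ℝ) < (1 + q ^ 2) * (1 - t) := by nlinarith [sq_nonneg q]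
    have hs0 : 0 < Real.sqrt ((1 + q ^ 2) * (1 - t)) := Real.sqrt_pos.mpr hE
    have h2l : Filter.Tendsto (fun l : ℝ => (2:ℝ) * l) Filter.atTop Filter.atTop :=
      Filter.Tendsto.const_mul_atTop (by norm_num) Filter.tendsto_id
    have hq2l : Filter.Tendsto (fun l : ℝ => q ^ (2 * l)) Filter.atTop (nhds 0) :=
      (tendsto_rpow_atTop_of_base_lt_one q (by linarith) hq1).comp h2l
    have hg : Filter.Tendsto (fun l : ℝ =>
        (((q ^ (2 * N) + (q ^ (2 * N))⁻¹ + 4) / (1 - q ^ 2) ^ 3) *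
          (1 + (t - 1 + q ^ (2 * N)) ^ 2 / ((1 - t) * q ^ (2 * N))) +
          (t - 1 + q ^ (2 * N)) ^ 2 / ((1 - t) * q ^ (2 * N))) * q ^ (2 * l))
        Filter.atTop (nhds 0) := by
      simpa using hq2l.const_mul _
    have hsq : Filter.Tendsto
        (fun l : ℝ => alphaN q t N l * (Real.sqrt ((1 + q ^ 2) * (1 - t)))⁻¹ - 1)
        Filter.atTop (nhds 0) := by
      apply squeeze_zero_norm' _ hg
      filter_upwards [Filter.eventually_ge_atTop (max |N| 1)] with l hl
      rw [Real.norm_eq_abs]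
      exact key_bound q t N l hq0 hq1 ht0 ht1 hl
    have hfin := (hsq.add_const 1).mul_const (Real.sqrt ((1 + q ^ 2) * (1 - t)))
    have heq : (fun l : ℝ =>
        (alphaN q t N l * (Real.sqrt ((1 + q ^ 2) * (1 - t)))⁻¹ - 1 + 1) *
          Real.sqrt ((1 + q ^ 2) * (1 - t))) = fun l : ℝ => alphaN q t N l := by
      funext l
      rw [sub_add_cancel, mul_assoc, inv_mul_cancel₀ hs0.ne', mul_one]
    rw [heq] at hfin
    simpa using hfin


end Podles
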